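/- Let β ≥ 1, let T ≥ 2 be a real number, and write L := log₂(T) ≥ 1. Let d_1,...,d_n be positive reals with Σ_{ℓ=1}^n d_ℓ ≤ T, and let V ≥ 0 be a real number with Σ_{ℓ=1}^{n−1} L³·d_ℓ^{−1/(β+1)} ≤ V. Then Σ_{ℓ=1}^n d_ℓ^{β/(β+1)}·L³ ≤ min( n^{1/(β+1)}·T^{β/(β+1)}·L³ , V^{1/(β+2)}·T^{(β+1)/(β+2)}·L³ + T^{β/(β+1)}·L³ ). -/

import Mathlib

/-- Relating episode lengths to non-stationarity measures: if `Σ dℓ ≤ T` and the variation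
budget `V` dominates `Σ_{ℓ<n} L³·dℓ^{−1/(β+1)}`, then
`Σ dℓ^{β/(β+1)}·L³ ≤ min( n^{1/(β+1)}·T^{β/(β+1)}·L³ , V^{1/(β+2)}·T^{(β+1)/(β+2)}·L³ + T^{β/(β+1)}·L³ )`. -/
theorem episodes_to_nonstationarity (β T L : ℝ) (n : ℕ) (d : Fin n → ℝ) (V : ℝ)
    (hβ : 1 ≤ β) (hT : 2 ≤ T) (hL : L = Real.logb 2 T) (hL1 : 1 ≤ L)
    (hd : ∀ i, 0 < d i) (hsum : ∑ i, d i ≤ T) (hV0 : 0 ≤ V)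
    (hvar : ∑ i ∈ Finset.univ.filter (fun i : Fin n => (i : ℕ) + 1 < n),
        L ^ 3 * d i ^ (-(1 / (β + 1))) ≤ V) :
    ∑ i, d i ^ (β / (β + 1)) * L ^ 3 ≤
      min ((n : ℝ) ^ (1 / (β + 1)) * T ^ (β / (β + 1)) * L ^ 3)
        (V ^ (1 / (β + 2)) * T ^ ((β + 1) / (β + 2)) * L ^ 3 + T ^ (β / (β + 1)) * L ^ 3) := by
  have hB1 : (0:ℝ) < β + 1 := by linarith
  have hB2 : (0:ℝ) < β + 2 := by linarith
  have hβ0 : (0:ℝ) < β := by linarith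
  have hT0 : (0:ℝ) < T := by linarith
  have hL0 : (0:ℝ) < L := by linarith
  have hL3 : (1:ℝ) ≤ L ^ 3 := by
    calc (1:ℝ) = 1 ^ 3 := by norm_num
      _ ≤ L ^ 3 := pow_le_pow_left₀ zero_le_one hL1 3
  have hL30 : (0:ℝ) < L ^ 3 := by positivity
  have hp0 : (0:ℝ) ≤ β / (β + 1) := by positivity
  have hdT : ∀ i, d i ≤ T := fun i =>
    le_trans (Finset.single_le_sum (fun j _ => (hd j).le) (Finset.mem_univ i)) hsum
  rw [← Finset.sum_mul]
  refine le_min ?_ ?_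
  · -- Jensen bound
    have hpq : Real.HolderConjugate (β + 1) ((β + 1) / β) := by
      rw [Real.holderConjugate_iff]
      constructor
      · linarith
      · rw [inv_div]
        field_simp
        ring
    have h := Real.inner_le_Lp_mul_Lq_of_nonneg (s := Finset.univ)
        (f := fun _ : Fin n => (1:ℝ)) (g := fun i => d i ^ (β / (β + 1))) hpq
        (fun i _ => zero_le_one) (fun i _ => Real.rpow_nonneg (hd i).le _)
    simp only [one_mul, Real.one_rpow, Finset.sum_const, Finset.card_univ,
      Fintype.card_fin, nsmul_eq_mul, mul_one] at h
    have hg : ∀ i : Fin n, (d i ^ (β / (β + 1))) ^ ((β + 1) / β) = d i := by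
      intro i
      rw [← Real.rpow_mul (hd i).le]
      rw [show β / (β + 1) * ((β + 1) / β) = 1 by field_simp]
      exact Real.rpow_one _
    simp only [hg] at h
    rw [one_div_div] at h
    refine le_trans (mul_le_mul_of_nonneg_right (le_trans h ?_) hL30.le) le_rfl
    exact mul_le_mul_of_nonneg_left
      (Real.rpow_le_rpow (Finset.sum_nonneg fun i _ => (hd i).le) hsum hp0)
      (Real.rpow_nonneg (Nat.cast_nonneg n) _)
  · -- variation bound
    set s₁ := Finset.univ.filter (fun i : Fin n => (i : ℕ) + 1 < n) with hs₁
    rw [← Finset.sum_filter_add_sum_filter_not Finset.univ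
      (fun i : Fin n => (i : ℕ) + 1 < n) (fun i => d i ^ (β / (β + 1))), add_mul]
    have h2 : (∑ i ∈ Finset.univ.filter (fun i : Fin n => ¬((i : ℕ) + 1 < n)),
        d i ^ (β / (β + 1))) * L ^ 3 ≤ T ^ (β / (β + 1)) * L ^ 3 := by
      have hcard : (Finset.univ.filter (fun i : Fin n => ¬((i : ℕ) + 1 < n))).card ≤ 1 := by
        refine Finset.card_le_one.2 fun a ha b hb => ?_
        simp only [Finset.mem_filter] at ha hb
        have := a.isLt; have := b.isLt
        exact Fin.ext (by omega)
      have hterm : ∀ i ∈ Finset.univ.filter (fun i : Fin n => ¬((i : ℕ) + 1 < n)),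
          d i ^ (β / (β + 1)) ≤ T ^ (β / (β + 1)) := fun i _ =>
        Real.rpow_le_rpow (hd i).le (hdT i) hp0
      calc (∑ i ∈ Finset.univ.filter (fun i : Fin n => ¬((i : ℕ) + 1 < n)),
              d i ^ (β / (β + 1))) * L ^ 3
          ≤ ((Finset.univ.filter (fun i : Fin n => ¬((i : ℕ) + 1 < n))).card •
              (T ^ (β / (β + 1)))) * L ^ 3 :=
            mul_le_mul_of_nonneg_right (Finset.sum_le_card_nsmul _ _ _ hterm) hL30.le
        _ ≤ T ^ (β / (β + 1)) * L ^ 3 := by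
            rw [nsmul_eq_mul]
            have hT' : (0:ℝ) ≤ T ^ (β / (β + 1)) := Real.rpow_nonneg hT0.le _
            have hc1 : ((Finset.univ.filter (fun i : Fin n => ¬((i : ℕ) + 1 < n))).card : ℝ) ≤ 1 := by
              exact_mod_cast hcard
            exact mul_le_mul_of_nonneg_right (mul_le_of_le_one_left hT' hc1) hL30.le
    have h1 : (∑ i ∈ s₁, d i ^ (β / (β + 1))) * L ^ 3 ≤
        V ^ (1 / (β + 2)) * T ^ ((β + 1) / (β + 2)) * L ^ 3 := by
      have hpq2 : Real.HolderConjugate (β + 2) ((β + 2) / (β + 1)) := by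
        rw [Real.holderConjugate_iff]
        constructor
        · linarith
        · rw [inv_div]
          field_simp
          ring
      have hh := Real.inner_le_Lp_mul_Lq_of_nonneg (s := s₁)
          (f := fun i => d i ^ (-(1 / (β + 1)) * (1 / (β + 2))))
          (g := fun i => d i ^ ((β + 1) / (β + 2))) hpq2
          (fun i _ => Real.rpow_nonneg (hd i).le _) (fun i _ => Real.rpow_nonneg (hd i).le _)
      have hfg : ∀ i : Fin n, d i ^ (-(1 / (β + 1)) * (1 / (β + 2))) * d i ^ ((β + 1) / (β + 2))
          = d i ^ (β / (β + 1)) := by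
        intro i
        rw [← Real.rpow_add (hd i)]
        congr 1
        field_simp
        ring
      have hf2 : ∀ i : Fin n, (d i ^ (-(1 / (β + 1)) * (1 / (β + 2)))) ^ (β + 2)
          = d i ^ (-(1 / (β + 1))) := by
        intro i
        rw [← Real.rpow_mul (hd i).le]
        congr 1
        field_simp
        try ring
      have hg2 : ∀ i : Fin n, (d i ^ ((β + 1) / (β + 2))) ^ ((β + 2) / (β + 1)) = d i := by
        intro i
        rw [← Real.rpow_mul (hd i).le]
        rw [show (β + 1) / (β + 2) * ((β + 2) / (β + 1)) = 1 by field_simp]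
        exact Real.rpow_one _
      simp only [hfg, hf2, hg2] at hh
      rw [one_div_div] at hh
      -- bound the two factors
      have hA : ∑ i ∈ s₁, d i ^ (-(1 / (β + 1))) ≤ V / L ^ 3 := by
        rw [le_div_iff₀ hL30, Finset.sum_mul]
        refine le_trans (le_of_eq (Finset.sum_congr rfl fun i _ => mul_comm _ _)) hvar
      have hA0 : (0:ℝ) ≤ ∑ i ∈ s₁, d i ^ (-(1 / (β + 1))) :=
        Finset.sum_nonneg fun i _ => Real.rpow_nonneg (hd i).le _
      have hB : ∑ i ∈ s₁, d i ≤ T :=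
        le_trans (Finset.sum_le_sum_of_subset_of_nonneg (Finset.filter_subset _ _)
          (fun i _ _ => (hd i).le)) hsum
      have hB0 : (0:ℝ) ≤ ∑ i ∈ s₁, d i := Finset.sum_nonneg fun i _ => (hd i).le
      have hfac1 : (∑ i ∈ s₁, d i ^ (-(1 / (β + 1)))) ^ (1 / (β + 2)) ≤ V ^ (1 / (β + 2)) := by
        refine Real.rpow_le_rpow hA0 (le_trans hA ?_) (by positivity)
        exact div_le_self hV0 hL3
      have hfac2 : (∑ i ∈ s₁, d i) ^ ((β + 1) / (β + 2)) ≤ T ^ ((β + 1) / (β + 2)) :=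
        Real.rpow_le_rpow hB0 hB (by positivity)
      have hkey : ∑ i ∈ s₁, d i ^ (β / (β + 1)) ≤ V ^ (1 / (β + 2)) * T ^ ((β + 1) / (β + 2)) :=
        le_trans hh (mul_le_mul hfac1 hfac2 (Real.rpow_nonneg hB0 _) (Real.rpow_nonneg hV0 _))
      exact mul_le_mul_of_nonneg_right hkey hL30.le
    exact add_le_add h1 h2
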